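/- Let n, A, B, C be positive integers with M = A + B + C, and let S be a finite set of squares of the n×n board such that every square of S lies on one of A fixed columns, every square of S lies on one of B fixed rows, and every square of S lies on one of C fixed diagonals (each of either orientation). Then |S| ≤ ⌊M²/12⌋ if M ≡ 0, 1, 5, 7, or 11 (mod 12), and |S| ≤ ⌊M²/12⌋ + 1 otherwise. -/

import Mathlib

/-- The n×n board: squares (x,y) ∈ ℤ×ℤ with 1 ≤ x ≤ n and 1 ≤ y ≤ n. -/
noncomputable def board (n : ℕ) : Finset (ℤ × ℤ) := Finset.Icc 1 (n : ℤ) ×ˢ Finset.Icc 1 (n : ℤ)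

/-- A line of the board: a row (fixed y), a column (fixed x), a positive
diagonal (fixed x − y), or a negative diagonal (fixed x + y). -/
inductive Line : Type where
  | row : ℤ → Line
  | col : ℤ → Line
  | posDiag : ℤ → Line
  | negDiag : ℤ → Line
deriving DecidableEq

/-- The defining condition for a point to be on a given line. -/
def Line.pred : Line → ℤ × ℤ → Prop
  | .row b, p => p.2 = b
  | .col a, p => p.1 = a
  | .posDiag d, p => p.1 - p.2 = d
  | .negDiag s, p => p.1 + p.2 = s

instance (L : Line) (p : ℤ × ℤ) : Decidable (L.pred p) :=
  match L with
  | .row b => inferInstanceAs (Decidable (p.2 = b))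
  | .col a => inferInstanceAs (Decidable (p.1 = a))
  | .posDiag d => inferInstanceAs (Decidable (p.1 - p.2 = d))
  | .negDiag s => inferInstanceAs (Decidable (p.1 + p.2 = s))

/-- The set of squares of the n×n board lying on a line. -/
noncomputable def Line.squares (n : ℕ) (L : Line) : Finset (ℤ × ℤ) := (board n).filter L.pred

/-- The length of a line: its number of board squares. -/
noncomputable def Line.length (n : ℕ) (L : Line) : ℕ := (L.squares n).card

/-- Whether a line is a diagonal (of either orientation). -/
def Line.isDiag : Line → Prop
  | .posDiag _ => True
  | .negDiag _ => True
  | _ => False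

/-- The set of board squares attacked by a placement S of queens: squares q on
the board such that some queen p ∈ S with p ≠ q shares a row, column, or
diagonal with q. -/
noncomputable def attacked (n : ℕ) (S : Finset (ℤ × ℤ)) : Finset (ℤ × ℤ) :=
  S.biUnion fun p => (board n).filter fun q =>
    q ≠ p ∧ (p.1 = q.1 ∨ p.2 = q.2 ∨ p.1 - p.2 = q.1 - q.2 ∨ p.1 + p.2 = q.1 + q.2)

/-- G(m) = ⌊m²/12⌋ + 1 if m ≡ 3, 6, 9 (mod 12) or m = 10; ⌊m²/12⌋ otherwise. -/
def G (m : ℕ) : ℕ :=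
  if m % 12 = 3 ∨ m % 12 = 6 ∨ m % 12 = 9 ∨ m = 10 then m ^ 2 / 12 + 1 else m ^ 2 / 12


section QDProofSection
open Finset

namespace QDProof

lemma rank_strict {X : Finset ℤ} {x y : ℤ} (hx : x ∈ X) (hxy : x < y) :
    (X.filter (· < x)).card < (X.filter (· < y)).card := by
  apply Finset.card_lt_card
  rw [Finset.ssubset_iff_of_subset]
  · exact ⟨x, Finset.mem_filter.mpr ⟨hx, hxy⟩, fun hc => by
      simp only [Finset.mem_filter] at hc; exact lt_irrefl x hc.2⟩
  · intro z hz
    simp only [Finset.mem_filter] at hz ⊢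
    exact ⟨hz.1, hz.2.trans hxy⟩

lemma rank_inj {X : Finset ℤ} {x y : ℤ} (hx : x ∈ X) (hy : y ∈ X)
    (hr : (X.filter (· < x)).card = (X.filter (· < y)).card) : x = y := by
  rcases lt_trichotomy x y with h | h | h
  · exact absurd hr (Nat.ne_of_lt (rank_strict hx h))
  · exact h
  · exact absurd hr.symm (Nat.ne_of_lt (rank_strict hy h))

lemma rank_add {X : Finset ℤ} {x : ℤ} (hx : x ∈ X) :
    (X.filter (· < x)).card + (X.filter (fun z => x < z)).card + 1 = X.card := by
  classical
  have hu : X.filter (· < x) ∪ X.filter (fun z => x < z) = X.erase x := by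
    ext z
    simp only [Finset.mem_union, Finset.mem_filter, Finset.mem_erase]
    constructor
    · rintro (⟨hz, hlt⟩ | ⟨hz, hlt⟩) <;> exact ⟨by omega, hz⟩
    · rintro ⟨hne, hz⟩
      rcases lt_or_gt_of_ne hne with h | h
      · exact Or.inl ⟨hz, h⟩
      · exact Or.inr ⟨hz, h⟩
  have hd : Disjoint (X.filter (· < x)) (X.filter (fun z => x < z)) := by
    rw [Finset.disjoint_left]
    intro z hz hz'
    simp only [Finset.mem_filter] at hz hz'
    omega
  have := Finset.card_union_of_disjoint hd
  rw [hu, Finset.card_erase_of_mem hx] at this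
  have hpos : 1 ≤ X.card := Finset.card_pos.mpr ⟨x, hx⟩
  omega


def onD : ℤ ⊕ ℤ → ℤ × ℤ → Prop
  | .inl d, p => p.1 - p.2 = d
  | .inr s, p => p.1 + p.2 = s

instance (ℓ : ℤ ⊕ ℤ) : DecidablePred (onD ℓ) :=
  match ℓ with
  | .inl d => fun p => inferInstanceAs (Decidable (p.1 - p.2 = d))
  | .inr s => fun p => inferInstanceAs (Decidable (p.1 + p.2 = s))

lemma onD_inj {ℓ : ℤ ⊕ ℤ} {p q : ℤ × ℤ} (hp : onD ℓ p) (hq : onD ℓ q)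
    (h1 : p.1 = q.1) : p = q := by
  cases ℓ with
  | inl d => simp only [onD] at hp hq; exact Prod.ext h1 (by omega)
  | inr s => simp only [onD] at hp hq; exact Prod.ext h1 (by omega)

/-- Points of T with fewer than h T-predecessors (by first coordinate) number ≤ h,
    provided fst is injective on T. -/
lemma low_frank_card (T : Finset (ℤ × ℤ)) (h : ℕ)
    (hinj : ∀ p ∈ T, ∀ q ∈ T, p.1 = q.1 → p = q) :
    (T.filter (fun p => (T.filter (fun q => q.1 < p.1)).card < h)).card ≤ h := by
  classical
  have := Finset.card_le_card_of_injOn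
    (f := fun p => (T.filter (fun q => q.1 < p.1)).card)
    (s := T.filter (fun p => (T.filter (fun q => q.1 < p.1)).card < h))
    (t := Finset.range h) ?_ ?_
  · simpa using this
  · intro p hp
    simp only [Finset.mem_coe, Finset.mem_filter] at hp
    simpa using hp.2
  · intro p hp q hq he
    simp only [Finset.coe_filter, Set.mem_setOf_eq] at hp hq
    rcases lt_trichotomy p.1 q.1 with h1 | h1 | h1
    · exfalso
      have : (T.filter (fun r => r.1 < p.1)).card < (T.filter (fun r => r.1 < q.1)).card := by
        apply Finset.card_lt_card
        rw [Finset.ssubset_iff_of_subset]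
        · exact ⟨p, Finset.mem_filter.mpr ⟨hp.1, h1⟩, fun hc => by
            simp only [Finset.mem_filter] at hc; exact lt_irrefl _ hc.2⟩
        · intro r hr
          simp only [Finset.mem_filter] at hr ⊢
          exact ⟨hr.1, hr.2.trans h1⟩
      dsimp only at he; omega
    · exact hinj p hp.1 q hq.1 h1
    · exfalso
      have : (T.filter (fun r => r.1 < q.1)).card < (T.filter (fun r => r.1 < p.1)).card := by
        apply Finset.card_lt_card
        rw [Finset.ssubset_iff_of_subset]
        · exact ⟨q, Finset.mem_filter.mpr ⟨hq.1, h1⟩, fun hc => by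
            simp only [Finset.mem_filter] at hc; exact lt_irrefl _ hc.2⟩
        · intro r hr
          simp only [Finset.mem_filter] at hr ⊢
          exact ⟨hr.1, hr.2.trans h1⟩
      dsimp only at he; omega

lemma high_brank_card (T : Finset (ℤ × ℤ)) (h : ℕ)
    (hinj : ∀ p ∈ T, ∀ q ∈ T, p.1 = q.1 → p = q) :
    (T.filter (fun p => (T.filter (fun q => p.1 < q.1)).card < h)).card ≤ h := by
  classical
  have := Finset.card_le_card_of_injOn
    (f := fun p => (T.filter (fun q => p.1 < q.1)).card)
    (s := T.filter (fun p => (T.filter (fun q => p.1 < q.1)).card < h))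
    (t := Finset.range h) ?_ ?_
  · simpa using this
  · intro p hp
    simp only [Finset.mem_coe, Finset.mem_filter] at hp
    simpa using hp.2
  · intro p hp q hq he
    simp only [Finset.coe_filter, Set.mem_setOf_eq] at hp hq
    rcases lt_trichotomy p.1 q.1 with h1 | h1 | h1
    · exfalso
      have : (T.filter (fun r => q.1 < r.1)).card < (T.filter (fun r => p.1 < r.1)).card := by
        apply Finset.card_lt_card
        rw [Finset.ssubset_iff_of_subset]
        · exact ⟨q, Finset.mem_filter.mpr ⟨hq.1, h1⟩, fun hc => by
            simp only [Finset.mem_filter] at hc; exact lt_irrefl _ hc.2⟩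
        · intro r hr
          simp only [Finset.mem_filter] at hr ⊢
          exact ⟨hr.1, h1.trans hr.2⟩
      dsimp only at he; omega
    · exact hinj p hp.1 q hq.1 h1
    · exfalso
      have : (T.filter (fun r => p.1 < r.1)).card < (T.filter (fun r => q.1 < r.1)).card := by
        apply Finset.card_lt_card
        rw [Finset.ssubset_iff_of_subset]
        · exact ⟨p, Finset.mem_filter.mpr ⟨hp.1, h1⟩, fun hc => by
            simp only [Finset.mem_filter] at hc; exact lt_irrefl _ hc.2⟩
        · intro r hr
          simp only [Finset.mem_filter] at hr ⊢
          exact ⟨hr.1, h1.trans hr.2⟩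
      dsimp only at he; omega

lemma diag_count (T : Finset (ℤ × ℤ)) (ℓ : ℤ ⊕ ℤ) (h : ℕ) (X Y : Finset ℤ)
    (hX : ∀ p ∈ T, p.1 ∈ X) (hY : ∀ p ∈ T, p.2 ∈ Y)
    (hon : ∀ p ∈ T, onD ℓ p)
    (hout : ∀ p ∈ T, (X.filter (· < p.1)).card < h ∨ X.card ≤ (X.filter (· < p.1)).card + h
        ∨ (Y.filter (· < p.2)).card < h ∨ Y.card ≤ (Y.filter (· < p.2)).card + h) :
    T.card ≤ 2 * h := by
  classical
  have hinj : ∀ p ∈ T, ∀ q ∈ T, p.1 = q.1 → p = q :=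
    fun p hp q hq h1 => onD_inj (hon p hp) (hon q hq) h1
  -- frank bounds by X
  have hfX : ∀ p ∈ T, (T.filter (fun q => q.1 < p.1)).card ≤ (X.filter (· < p.1)).card := by
    intro p hp
    apply Finset.card_le_card_of_injOn Prod.fst
    · intro q hq; simp only [Finset.mem_coe, Finset.mem_filter] at hq ⊢; exact ⟨hX q hq.1, hq.2⟩
    · intro q hq r hr h1
      simp only [Finset.coe_filter, Set.mem_setOf_eq] at hq hr
      exact hinj q hq.1 r hr.1 h1
  have hbX : ∀ p ∈ T, (T.filter (fun q => p.1 < q.1)).card ≤ (X.filter (fun z => p.1 < z)).card := by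
    intro p hp
    apply Finset.card_le_card_of_injOn Prod.fst
    · intro q hq; simp only [Finset.mem_coe, Finset.mem_filter] at hq ⊢; exact ⟨hX q hq.1, hq.2⟩
    · intro q hq r hr h1
      simp only [Finset.coe_filter, Set.mem_setOf_eq] at hq hr
      exact hinj q hq.1 r hr.1 h1
  -- frank/brank bounds by Y, depending on orientation
  have hfY : ∀ p ∈ T, ∀ d, ℓ = Sum.inl d →
      (T.filter (fun q => q.1 < p.1)).card ≤ (Y.filter (· < p.2)).card := by
    intro p hp d hd
    apply Finset.card_le_card_of_injOn Prod.snd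
    · intro q hq
      simp only [Finset.mem_coe, Finset.mem_filter] at hq ⊢
      have h1 := hon q hq.1; have h2 := hon p hp
      rw [hd] at h1 h2; simp only [onD] at h1 h2
      exact ⟨hY q hq.1, by omega⟩
    · intro q hq r hr h2
      simp only [Finset.coe_filter, Set.mem_setOf_eq] at hq hr
      have hq1 := hon q hq.1; have hr1 := hon r hr.1
      rw [hd] at hq1 hr1; simp only [onD] at hq1 hr1
      exact hinj q hq.1 r hr.1 (by omega)
  have hbY : ∀ p ∈ T, ∀ d, ℓ = Sum.inl d →
      (T.filter (fun q => p.1 < q.1)).card ≤ (Y.filter (fun z => p.2 < z)).card := by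
    intro p hp d hd
    apply Finset.card_le_card_of_injOn Prod.snd
    · intro q hq
      simp only [Finset.mem_coe, Finset.mem_filter] at hq ⊢
      have h1 := hon q hq.1; have h2 := hon p hp
      rw [hd] at h1 h2; simp only [onD] at h1 h2
      exact ⟨hY q hq.1, by omega⟩
    · intro q hq r hr h2
      simp only [Finset.coe_filter, Set.mem_setOf_eq] at hq hr
      have hq1 := hon q hq.1; have hr1 := hon r hr.1
      rw [hd] at hq1 hr1; simp only [onD] at hq1 hr1
      exact hinj q hq.1 r hr.1 (by omega)
  have hfY' : ∀ p ∈ T, ∀ s, ℓ = Sum.inr s →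
      (T.filter (fun q => q.1 < p.1)).card ≤ (Y.filter (fun z => p.2 < z)).card := by
    intro p hp s hd
    apply Finset.card_le_card_of_injOn Prod.snd
    · intro q hq
      simp only [Finset.mem_coe, Finset.mem_filter] at hq ⊢
      have h1 := hon q hq.1; have h2 := hon p hp
      rw [hd] at h1 h2; simp only [onD] at h1 h2
      exact ⟨hY q hq.1, by omega⟩
    · intro q hq r hr h2
      simp only [Finset.coe_filter, Set.mem_setOf_eq] at hq hr
      have hq1 := hon q hq.1; have hr1 := hon r hr.1
      rw [hd] at hq1 hr1; simp only [onD] at hq1 hr1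
      exact hinj q hq.1 r hr.1 (by omega)
  have hbY' : ∀ p ∈ T, ∀ s, ℓ = Sum.inr s →
      (T.filter (fun q => p.1 < q.1)).card ≤ (Y.filter (· < p.2)).card := by
    intro p hp s hd
    apply Finset.card_le_card_of_injOn Prod.snd
    · intro q hq
      simp only [Finset.mem_coe, Finset.mem_filter] at hq ⊢
      have h1 := hon q hq.1; have h2 := hon p hp
      rw [hd] at h1 h2; simp only [onD] at h1 h2
      exact ⟨hY q hq.1, by omega⟩
    · intro q hq r hr h2
      simp only [Finset.coe_filter, Set.mem_setOf_eq] at hq hr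
      have hq1 := hon q hq.1; have hr1 := hon r hr.1
      rw [hd] at hq1 hr1; simp only [onD] at hq1 hr1
      exact hinj q hq.1 r hr.1 (by omega)
  -- covering
  have hcover : T ⊆ (T.filter (fun p => (T.filter (fun q => q.1 < p.1)).card < h)) ∪
      (T.filter (fun p => (T.filter (fun q => p.1 < q.1)).card < h)) := by
    intro p hp
    rw [Finset.mem_union, Finset.mem_filter, Finset.mem_filter]
    have hrankX := rank_add (hX p hp)
    have hrankY := rank_add (hY p hp)
    rcases hout p hp with hc | hc | hc | hc
    · exact Or.inl ⟨hp, lt_of_le_of_lt (hfX p hp) hc⟩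
    · refine Or.inr ⟨hp, ?_⟩
      have := hbX p hp
      omega
    · cases ℓ with
      | inl d => exact Or.inl ⟨hp, lt_of_le_of_lt (hfY p hp d rfl) hc⟩
      | inr s =>
        refine Or.inr ⟨hp, ?_⟩
        have := hbY' p hp s rfl
        omega
    · cases ℓ with
      | inl d =>
        refine Or.inr ⟨hp, ?_⟩
        have := hbY p hp d rfl
        omega
      | inr s =>
        refine Or.inl ⟨hp, ?_⟩
        have := hfY' p hp s rfl
        omega
  calc T.card ≤ _ := Finset.card_le_card hcover
    _ ≤ _ + _ := Finset.card_union_le _ _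
    _ ≤ h + h := Nat.add_le_add (low_frank_card T h hinj) (high_brank_card T h hinj)
    _ = 2 * h := by omega

/-- Key lemma: the even-parameter bound  |S| ≤ C·2h + (A-2h)(B-2h). -/
lemma key (X Y P Q : Finset ℤ) (S : Finset (ℤ × ℤ)) (h : ℕ)
    (hcov : ∀ p ∈ S, p.1 ∈ X ∧ p.2 ∈ Y ∧ (p.1 - p.2 ∈ P ∨ p.1 + p.2 ∈ Q))
    (hA : 2 * h ≤ X.card) (hB : 2 * h ≤ Y.card) :
    S.card ≤ (P.card + Q.card) * (2 * h) + (X.card - 2 * h) * (Y.card - 2 * h) := by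
  classical
  set A := X.card with hAdef
  set B := Y.card with hBdef
  set midp : ℤ × ℤ → Prop :=
    fun p => h ≤ (X.filter (· < p.1)).card ∧ (X.filter (· < p.1)).card + h < A ∧
      h ≤ (Y.filter (· < p.2)).card ∧ (Y.filter (· < p.2)).card + h < B with hmidp
  have hsplit := Finset.card_filter_add_card_filter_not (s := S) (p := midp)
  -- middle part
  have hmid : (S.filter midp).card ≤ (A - 2 * h) * (B - 2 * h) := by
    have hle := Finset.card_le_card_of_injOn
      (f := fun p => ((X.filter (· < p.1)).card, (Y.filter (· < p.2)).card))
      (s := S.filter midp)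
      (t := (Finset.Ico h (A - h)) ×ˢ (Finset.Ico h (B - h))) ?_ ?_
    · calc (S.filter midp).card ≤ _ := hle
        _ = (A - 2 * h) * (B - 2 * h) := by
          rw [Finset.card_product, Nat.card_Ico, Nat.card_Ico]
          congr 1 <;> omega
    · intro p hp
      simp only [Finset.mem_coe, Finset.mem_filter, hmidp] at hp
      simp only [Finset.mem_coe, Finset.mem_product, Finset.mem_Ico]
      obtain ⟨-, h1, h2, h3, h4⟩ := hp
      exact ⟨⟨h1, by omega⟩, ⟨h3, by omega⟩⟩
    · intro p hp q hq he
      simp only [Finset.coe_filter, Set.mem_setOf_eq] at hp hq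
      have hpx := (hcov p hp.1).1
      have hqx := (hcov q hq.1).1
      have hpy := (hcov p hp.1).2.1
      have hqy := (hcov q hq.1).2.1
      have h1 := congrArg Prod.fst he
      have h2 := congrArg Prod.snd he
      simp only at h1 h2
      exact Prod.ext (rank_inj hpx hqx h1) (rank_inj hpy hqy h2)
  -- outer part
  have hout : (S.filter (fun p => ¬ midp p)).card ≤ (P.card + Q.card) * (2 * h) := by
    set lines : Finset (ℤ ⊕ ℤ) :=
      P.map ⟨Sum.inl, Sum.inl_injective⟩ ∪ Q.map ⟨Sum.inr, Sum.inr_injective⟩ with hlines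
    set S2 := S.filter (fun p => ¬ midp p) with hS2
    have hsub : S2 ⊆ lines.biUnion (fun ℓ => S2.filter (onD ℓ)) := by
      intro p hp
      rw [Finset.mem_biUnion]
      have hp' : p ∈ S := Finset.mem_of_mem_filter p hp
      rcases (hcov p hp').2.2 with hd | hd
      · refine ⟨Sum.inl (p.1 - p.2), ?_, ?_⟩
        · rw [hlines, Finset.mem_union]
          exact Or.inl (Finset.mem_map.mpr ⟨p.1 - p.2, hd, rfl⟩)
        · rw [Finset.mem_filter]; exact ⟨hp, rfl⟩
      · refine ⟨Sum.inr (p.1 + p.2), ?_, ?_⟩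
        · rw [hlines, Finset.mem_union]
          exact Or.inr (Finset.mem_map.mpr ⟨p.1 + p.2, hd, rfl⟩)
        · rw [Finset.mem_filter]; exact ⟨hp, rfl⟩
    have hcards : ∀ ℓ ∈ lines, (S2.filter (onD ℓ)).card ≤ 2 * h := by
      intro ℓ _
      apply diag_count _ ℓ h X Y
      · intro p hp
        exact (hcov p (Finset.mem_of_mem_filter p (Finset.mem_of_mem_filter p hp))).1
      · intro p hp
        exact (hcov p (Finset.mem_of_mem_filter p (Finset.mem_of_mem_filter p hp))).2.1
      · intro p hp
        exact (Finset.mem_filter.mp hp).2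
      · intro p hp
        have hp2 : p ∈ S2 := Finset.mem_of_mem_filter p hp
        have hnm : ¬ midp p := (Finset.mem_filter.mp hp2).2
        rw [hmidp] at hnm
        omega
    calc S2.card ≤ (lines.biUnion (fun ℓ => S2.filter (onD ℓ))).card :=
          Finset.card_le_card hsub
      _ ≤ ∑ ℓ ∈ lines, (S2.filter (onD ℓ)).card := Finset.card_biUnion_le
      _ ≤ ∑ _ℓ ∈ lines, 2 * h := Finset.sum_le_sum hcards
      _ = lines.card * (2 * h) := by rw [Finset.sum_const, smul_eq_mul]
      _ = (P.card + Q.card) * (2 * h) := by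
          congr 1
          rw [hlines, Finset.card_union_of_disjoint, Finset.card_map, Finset.card_map]
          rw [Finset.disjoint_left]
          rintro a ha hb
          obtain ⟨x, -, hx⟩ := Finset.mem_map.mp ha
          obtain ⟨y, -, hy⟩ := Finset.mem_map.mp hb
          rw [← hx] at hy
          exact Sum.inl_ne_inr (hy.symm)
  omega

lemma onD_inj2 {ℓ : ℤ ⊕ ℤ} {p q : ℤ × ℤ} (hp : onD ℓ p) (hq : onD ℓ q)
    (h2 : p.2 = q.2) : p = q := by
  cases ℓ with
  | inl d => simp only [onD] at hp hq; exact Prod.ext (by omega) h2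
  | inr s => simp only [onD] at hp hq; exact Prod.ext (by omega) h2

/-- Trivial bound: |S| ≤ C * min(A,B). -/
lemma triv (X Y P Q : Finset ℤ) (S : Finset (ℤ × ℤ))
    (hcov : ∀ p ∈ S, p.1 ∈ X ∧ p.2 ∈ Y ∧ (p.1 - p.2 ∈ P ∨ p.1 + p.2 ∈ Q)) :
    S.card ≤ (P.card + Q.card) * min X.card Y.card := by
  classical
  set lines : Finset (ℤ ⊕ ℤ) :=
    P.map ⟨Sum.inl, Sum.inl_injective⟩ ∪ Q.map ⟨Sum.inr, Sum.inr_injective⟩ with hlines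
  have hsub : S ⊆ lines.biUnion (fun ℓ => S.filter (onD ℓ)) := by
    intro p hp
    rw [Finset.mem_biUnion]
    rcases (hcov p hp).2.2 with hd | hd
    · exact ⟨Sum.inl (p.1 - p.2),
        by rw [hlines, Finset.mem_union]; exact Or.inl (Finset.mem_map.mpr ⟨_, hd, rfl⟩),
        Finset.mem_filter.mpr ⟨hp, rfl⟩⟩
    · exact ⟨Sum.inr (p.1 + p.2),
        by rw [hlines, Finset.mem_union]; exact Or.inr (Finset.mem_map.mpr ⟨_, hd, rfl⟩),
        Finset.mem_filter.mpr ⟨hp, rfl⟩⟩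
  have hcards : ∀ ℓ ∈ lines, (S.filter (onD ℓ)).card ≤ min X.card Y.card := by
    intro ℓ _
    rw [le_min_iff]
    constructor
    · apply Finset.card_le_card_of_injOn Prod.fst
      · intro q hq
        exact (hcov q (Finset.mem_of_mem_filter q hq)).1
      · intro q hq r hr h1
        simp only [Finset.coe_filter, Set.mem_setOf_eq] at hq hr
        have := hq.2; have := hr.2
        cases ℓ with
        | inl d =>
          simp only [onD] at *
          exact Prod.ext h1 (by omega)
        | inr s =>
          simp only [onD] at *
          exact Prod.ext h1 (by omega)
    · apply Finset.card_le_card_of_injOn Prod.snd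
      · intro q hq
        exact (hcov q (Finset.mem_of_mem_filter q hq)).2.1
      · intro q hq r hr h2
        simp only [Finset.coe_filter, Set.mem_setOf_eq] at hq hr
        exact onD_inj2 hq.2 hr.2 h2
  calc S.card ≤ (lines.biUnion (fun ℓ => S.filter (onD ℓ))).card := Finset.card_le_card hsub
    _ ≤ ∑ ℓ ∈ lines, (S.filter (onD ℓ)).card := Finset.card_biUnion_le
    _ ≤ ∑ _ℓ ∈ lines, min X.card Y.card := Finset.sum_le_sum hcards
    _ = lines.card * min X.card Y.card := by rw [Finset.sum_const, smul_eq_mul]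
    _ ≤ (P.card + Q.card) * min X.card Y.card := by
        apply Nat.mul_le_mul_right
        calc lines.card ≤ _ + _ := Finset.card_union_le _ _
          _ = P.card + Q.card := by rw [Finset.card_map, Finset.card_map]

/-- |x| ≥ k implies x² ≥ k². -/
lemma sq_ge {x k : ℤ} (hk : 0 ≤ k) (h : x ≤ -k ∨ k ≤ x) : k^2 ≤ x^2 := by
  rcases h with h | h <;> nlinarith

/-- Pure integer arithmetic core for the main case. -/
lemma quadMain (a b c n t : ℤ) (ha : 1 ≤ a) (hb : 1 ≤ b) (hc : 1 ≤ c)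
    (ht2 : t % 2 = 0)
    (hn : n ≤ c * t + (a - t) * (b - t))
    (he1 : -1 ≤ 2*t - (a+b-c)) (he2 : 2*t - (a+b-c) ≤ 2) :
    12 * n ≤ (a+b+c)^2 + 12 ∧
      (((a+b+c) % 12 = 0 ∨ (a+b+c) % 12 = 1 ∨ (a+b+c) % 12 = 5 ∨
        (a+b+c) % 12 = 7 ∨ (a+b+c) % 12 = 11) → 12 * n ≤ (a+b+c)^2) := by
  set m : ℤ := a + b + c with hm
  set ε : ℤ := 2*t - (a+b-c) with hε
  set D : ℤ := a + b - 2*c with hD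
  set E : ℤ := a - b with hE
  have hid : m^2 - 12*(c*t + (a-t)*(b-t)) = D^2 + 3*E^2 - 3*ε^2 := by
    rw [hm, hD, hE, hε]; ring
  have hmaster : 12*n ≤ m^2 - D^2 - 3*E^2 + 3*ε^2 := by linarith
  have hDnn := sq_nonneg D
  have hEnn := sq_nonneg E
  have heps : ε^2 ≤ 4 := by nlinarith [he1, he2]
  constructor
  · linarith
  · intro hr
    suffices h : 3*ε^2 ≤ D^2 + 3*E^2 by linarith
    have hcase : ε = -1 ∨ ε = 0 ∨ ε = 1 ∨ ε = 2 := by omega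
    rcases hcase with hv | hv | hv | hv
    · -- ε = -1 : m odd, m % 3 ≠ 0
      have hm3 : m % 3 ≠ 0 := by rcases hr with h|h|h|h|h <;> omega
      by_cases hE0 : E = 0
      · have h4 : (2:ℤ)^2 ≤ D^2 := sq_ge (by norm_num) (by omega)
        rw [hv]; norm_num; linarith
      · have h1 : (1:ℤ)^2 ≤ E^2 := sq_ge (by norm_num) (by omega)
        rw [hv]; norm_num; linarith
    · rw [hv]; norm_num; linarith
    · -- ε = 1
      have hm3 : m % 3 ≠ 0 := by rcases hr with h|h|h|h|h <;> omega
      by_cases hE0 : E = 0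
      · have h4 : (2:ℤ)^2 ≤ D^2 := sq_ge (by norm_num) (by omega)
        rw [hv]; norm_num; linarith
      · have h1 : (1:ℤ)^2 ≤ E^2 := sq_ge (by norm_num) (by omega)
        rw [hv]; norm_num; linarith
    · -- ε = 2 : m even, so m % 12 = 0
      have hm12 : m % 12 = 0 := by rcases hr with h|h|h|h|h <;> omega
      have hD3 : D % 3 = 0 := by omega
      have hD0 : D ≠ 0 := by omega
      by_cases hE0 : E = 0
      · have h36 : (6:ℤ)^2 ≤ D^2 := sq_ge (by norm_num) (by omega)
        rw [hv]; norm_num; linarith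
      · have h9 : (3:ℤ)^2 ≤ D^2 := sq_ge (by norm_num) (by omega)
        have h1 : (1:ℤ)^2 ≤ E^2 := sq_ge (by norm_num) (by omega)
        rw [hv]; norm_num; linarith

/-- Pure integer arithmetic for the skew case. -/
lemma quadSkew (a b c n : ℤ) (ha : 1 ≤ a) (hb : 1 ≤ b) (hc : 1 ≤ c)
    (hu : a + b ≤ c) (hn : n ≤ a * b) (hnn : 0 ≤ n) :
    12 * n ≤ (a+b+c)^2 := by
  nlinarith [sq_nonneg (a - b), sq_nonneg (a + b)]

/-- Pure integer arithmetic for the boundary case (b large). -/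
lemma quadBound (a b c n : ℤ) (ha : 1 ≤ a) (hb : 1 ≤ b) (hc : 1 ≤ c)
    (hba : a + c ≤ b) (hn : n ≤ c * a) :
    12 * n ≤ (a+b+c)^2 := by
  nlinarith [sq_nonneg (a - c)]

lemma arith (A B C N : ℕ) (hA : 1 ≤ A) (hB : 1 ≤ B) (hC : 1 ≤ C)
    (H1 : N ≤ C * min A B)
    (H2 : ∀ h : ℕ, 2 * h ≤ A → 2 * h ≤ B → N ≤ C * (2 * h) + (A - 2 * h) * (B - 2 * h)) :
    N ≤ if (A+B+C) % 12 = 0 ∨ (A+B+C) % 12 = 1 ∨ (A+B+C) % 12 = 5 ∨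
          (A+B+C) % 12 = 7 ∨ (A+B+C) % 12 = 11
        then (A+B+C)^2/12 else (A+B+C)^2/12 + 1 := by
  have hall : 12 * (N:ℤ) ≤ ((A:ℤ)+B+C)^2 + 12 ∧
      (((A+B+C) % 12 = 0 ∨ (A+B+C) % 12 = 1 ∨ (A+B+C) % 12 = 5 ∨
        (A+B+C) % 12 = 7 ∨ (A+B+C) % 12 = 11) →
        12 * (N:ℤ) ≤ ((A:ℤ)+B+C)^2) := by
    have hrZ : ((A+B+C) % 12 = 0 ∨ (A+B+C) % 12 = 1 ∨ (A+B+C) % 12 = 5 ∨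
        (A+B+C) % 12 = 7 ∨ (A+B+C) % 12 = 11) →
        (((A:ℤ)+B+C) % 12 = 0 ∨ ((A:ℤ)+B+C) % 12 = 1 ∨ ((A:ℤ)+B+C) % 12 = 5 ∨
        ((A:ℤ)+B+C) % 12 = 7 ∨ ((A:ℤ)+B+C) % 12 = 11) := by
      intro h; omega
    by_cases hu0 : A + B ≤ C
    · have h0 := H2 0 (by omega) (by omega)
      simp only [Nat.mul_zero, Nat.sub_zero] at h0
      have hz : (N:ℤ) ≤ (A:ℤ) * B := by exact_mod_cast (by simpa using h0)
      have := quadSkew (A:ℤ) B C N (by exact_mod_cast hA) (by exact_mod_cast hB)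
        (by exact_mod_cast hC) (by exact_mod_cast hu0) hz (by positivity)
      exact ⟨by linarith, fun _ => this⟩
    · push_neg at hu0
      set u : ℕ := A + B - C with hu
      set h0 : ℕ := (u + 2) / 4 with hh0
      by_cases hfit : 2 * h0 ≤ A ∧ 2 * h0 ≤ B
      · have hn := H2 h0 hfit.1 hfit.2
        have hnz : (N:ℤ) ≤ (C:ℤ) * (2*(h0:ℤ)) + ((A:ℤ) - 2*(h0:ℤ)) * ((B:ℤ) - 2*(h0:ℤ)) := by
          zify [hfit.1, hfit.2] at hn
          convert hn using 2 <;> push_cast <;> ring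
        have he1 : -1 ≤ 2*(2*(h0:ℤ)) - ((A:ℤ)+B-C) := by
          have h4 : 4 * h0 ≤ u + 2 ∧ u + 2 < 4 * h0 + 4 := by omega
          omega
        have he2 : 2*(2*(h0:ℤ)) - ((A:ℤ)+B-C) ≤ 2 := by
          have h4 : 4 * h0 ≤ u + 2 ∧ u + 2 < 4 * h0 + 4 := by omega
          omega
        have := quadMain (A:ℤ) B C N (2*(h0:ℤ)) (by exact_mod_cast hA) (by exact_mod_cast hB)
          (by exact_mod_cast hC) (by omega) hnz he1 he2
        exact ⟨this.1, fun hr => this.2 (hrZ hr)⟩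
      · rw [not_and_or] at hfit
        have hb' : 12 * (N:ℤ) ≤ ((A:ℤ)+B+C)^2 := by
          rcases hfit with hf | hf
          · push_neg at hf
            have hBA : A + C ≤ B := by omega
            have hmin : min A B = A := by omega
            rw [hmin] at H1
            have hz : (N:ℤ) ≤ (C:ℤ) * A := by exact_mod_cast H1
            have := quadBound (A:ℤ) B C N (by exact_mod_cast hA) (by exact_mod_cast hB)
              (by exact_mod_cast hC) (by exact_mod_cast hBA) hz
            linarith
          · push_neg at hf
            have hAB : B + C ≤ A := by omega
            have hmin : min A B = B := by omega
            rw [hmin] at H1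
            have hz : (N:ℤ) ≤ (C:ℤ) * B := by exact_mod_cast H1
            have := quadBound (B:ℤ) A C N (by exact_mod_cast hB) (by exact_mod_cast hA)
              (by exact_mod_cast hC) (by exact_mod_cast hAB) hz
            calc 12 * (N:ℤ) ≤ ((B:ℤ)+A+C)^2 := this
              _ = ((A:ℤ)+B+C)^2 := by ring
        exact ⟨by linarith, fun _ => hb'⟩
  split_ifs with hr
  · have h12 := hall.2 hr
    rw [Nat.le_div_iff_mul_le (by norm_num : 0 < 12)]
    have : (N:ℤ) * 12 ≤ ((A:ℤ)+B+C)^2 := by linarith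
    exact_mod_cast this
  · have h12 := hall.1
    have heq : (A+B+C)^2/12 + 1 = ((A+B+C)^2 + 12)/12 := by omega
    rw [heq, Nat.le_div_iff_mul_le (by norm_num : 0 < 12)]
    have : (N:ℤ) * 12 ≤ ((A:ℤ)+B+C)^2 + 12 := by linarith
    exact_mod_cast this

def isPos : Line → Bool
  | .posDiag _ => true
  | _ => false

def offset : Line → ℤ
  | .posDiag d => d
  | .negDiag s => s
  | .row b => b
  | .col a => a

end QDProof

end QDProofSection

/-- If every square of a finite set S of board squares lies on
one of A fixed columns, on one of B fixed rows, and on one of C fixed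
diagonals, and M = A + B + C, then |S| ≤ ⌊M²/12⌋ when
M ≡ 0, 1, 5, 7, 11 (mod 12) and |S| ≤ ⌊M²/12⌋ + 1 otherwise. -/
theorem covered_set_card_bound (n A B C M : ℕ) (hn : 0 < n) (hA : 0 < A)
    (hB : 0 < B) (hC : 0 < C) (hM : M = A + B + C)
    (S : Finset (ℤ × ℤ)) (hS : S ⊆ board n)
    (cols rows : Finset ℤ) (diags : Finset Line)
    (hcolsA : cols.card = A) (hrowsB : rows.card = B) (hdiagsC : diags.card = C)
    (hdiag : ∀ L ∈ diags, L.isDiag)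
    (hSc : ∀ p ∈ S, p.1 ∈ cols) (hSr : ∀ p ∈ S, p.2 ∈ rows)
    (hSd : ∀ p ∈ S, ∃ L ∈ diags, L.pred p) :
    S.card ≤ if M % 12 = 0 ∨ M % 12 = 1 ∨ M % 12 = 5 ∨ M % 12 = 7 ∨ M % 12 = 11
      then M ^ 2 / 12 else M ^ 2 / 12 + 1 := by
  classical
  open QDProof in
  set P : Finset ℤ := (diags.filter (fun L => isPos L = true)).image offset with hP
  set Q : Finset ℤ := (diags.filter (fun L => ¬ (isPos L = true))).image offset with hQ
  have hshapeP : ∀ L ∈ diags.filter (fun L => isPos L = true), ∃ d, L = Line.posDiag d := by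
    intro L hL
    have h2 := (Finset.mem_filter.mp hL).2
    cases L with
    | posDiag d => exact ⟨d, rfl⟩
    | row b => simp [isPos] at h2
    | col a => simp [isPos] at h2
    | negDiag s => simp [isPos] at h2
  have hshapeQ : ∀ L ∈ diags.filter (fun L => ¬ (isPos L = true)), ∃ s, L = Line.negDiag s := by
    intro L hL
    have h1 := (Finset.mem_filter.mp hL).1
    have h2 := (Finset.mem_filter.mp hL).2
    cases L with
    | negDiag s => exact ⟨s, rfl⟩
    | row b => exact absurd (hdiag _ h1) (by simp [Line.isDiag])
    | col a => exact absurd (hdiag _ h1) (by simp [Line.isDiag])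
    | posDiag d => simp [isPos] at h2
  have hPcard : P.card = (diags.filter (fun L => isPos L = true)).card := by
    apply Finset.card_image_of_injOn
    intro L hL L' hL' he
    obtain ⟨d, rfl⟩ := hshapeP L hL
    obtain ⟨d', rfl⟩ := hshapeP L' hL'
    simp only [offset] at he
    rw [he]
  have hQcard : Q.card = (diags.filter (fun L => ¬ (isPos L = true))).card := by
    apply Finset.card_image_of_injOn
    intro L hL L' hL' he
    obtain ⟨s, rfl⟩ := hshapeQ L hL
    obtain ⟨s', rfl⟩ := hshapeQ L' hL'
    simp only [offset] at he
    rw [he]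
  have hPQ : P.card + Q.card = C := by
    rw [hPcard, hQcard, ← hdiagsC]
    exact Finset.card_filter_add_card_filter_not _
  have hcov : ∀ p ∈ S, p.1 ∈ cols ∧ p.2 ∈ rows ∧ (p.1 - p.2 ∈ P ∨ p.1 + p.2 ∈ Q) := by
    intro p hp
    refine ⟨hSc p hp, hSr p hp, ?_⟩
    obtain ⟨L, hL, hpred⟩ := hSd p hp
    cases L with
    | row b => exact absurd (hdiag _ hL) (by simp [Line.isDiag])
    | col a => exact absurd (hdiag _ hL) (by simp [Line.isDiag])
    | posDiag d =>
      left
      rw [hP]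
      apply Finset.mem_image.mpr
      refine ⟨Line.posDiag d, Finset.mem_filter.mpr ⟨hL, by simp [isPos]⟩, ?_⟩
      simp only [offset]
      exact hpred.symm ▸ rfl
    | negDiag s =>
      right
      rw [hQ]
      apply Finset.mem_image.mpr
      refine ⟨Line.negDiag s, Finset.mem_filter.mpr ⟨hL, by simp [isPos]⟩, ?_⟩
      simp only [offset]
      exact hpred.symm ▸ rfl
  have H1 : S.card ≤ C * min A B := by
    have := QDProof.triv cols rows P Q S hcov
    rwa [hPQ, hcolsA, hrowsB] at this
  have H2 : ∀ h : ℕ, 2 * h ≤ A → 2 * h ≤ B →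
      S.card ≤ C * (2 * h) + (A - 2 * h) * (B - 2 * h) := by
    intro h h1 h2
    have := QDProof.key cols rows P Q S h hcov (by rwa [hcolsA]) (by rwa [hrowsB])
    rwa [hPQ, hcolsA, hrowsB] at this
  have := QDProof.arith A B C S.card hA hB hC H1 H2
  rwa [← hM] at this
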